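/- For every natural number N there exist an integer n ≥ N and a strongly connected oriented graph D on n vertices whose cop number satisfies c(D) ≥ √n / 5. -/

import Mathlib

open Classical

universe u

namespace CopsRobbers

variable {V : Type u}

/-- `CatchIn A k t c r` holds when, in the cops-and-robbers game on the digraph
with arc relation `A`, with the `k` cops currently at positions `c`, the robber
currently at `r`, and the cops to move, the cops can guarantee that some cop
occupies the robber's vertex within `t` further rounds (in each round every cop
either stays or moves along an out-arc, then the robber either stays or moves
along an out-arc; capture may occur right after the cops' move or after the
robber's move). -/
inductive CatchIn (A : V → V → Prop) (k : ℕ) : ℕ → (Fin k → V) → V → Prop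
  | caught {t : ℕ} {c : Fin k → V} {r : V} (h : ∃ i, c i = r) : CatchIn A k t c r
  | stepCatch {t : ℕ} {c : Fin k → V} {r : V} (c' : Fin k → V)
      (hc : ∀ i, c' i = c i ∨ A (c i) (c' i)) (h : ∃ i, c' i = r) :
      CatchIn A k (t + 1) c r
  | step {t : ℕ} {c : Fin k → V} {r : V} (c' : Fin k → V)
      (hc : ∀ i, c' i = c i ∨ A (c i) (c' i))
      (h : ∀ r' : V, r' = r ∨ A r r' → CatchIn A k t c' r') :
      CatchIn A k (t + 1) c r

/-- `k` cops can choose initial positions guaranteeing capture within `t` rounds,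
no matter which starting vertex the robber then chooses. -/
def CopsWinIn (A : V → V → Prop) (k t : ℕ) : Prop :=
  ∃ c : Fin k → V, ∀ r : V, CatchIn A k t c r

/-- `k` cops have a winning strategy on the digraph with arc relation `A`. -/
def CopsWin (A : V → V → Prop) (k : ℕ) : Prop := ∃ t, CopsWinIn A k t

/-- The cop number of a digraph: the least `k` such that `k` cops have a winning
strategy. -/
noncomputable def copNumber (A : V → V → Prop) : ℕ := sInf {k | CopsWin A k}

/-- The capture time of a digraph: the least `t` such that `copNumber A` cops
can guarantee capture within `t` rounds. -/
noncomputable def captureTime (A : V → V → Prop) : ℕ :=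
  sInf {t | CopsWinIn A (copNumber A) t}

/-- `A` is an orientation of the simple graph `G`: each edge of `G` is given
exactly one direction, and there are no other arcs. -/
def IsOrientation (G : SimpleGraph V) (A : V → V → Prop) : Prop :=
  (∀ u v, G.Adj u v ↔ (A u v ∨ A v u)) ∧ ∀ u v, A u v → ¬ A v u

/-- An oriented graph: a digraph with no loops and no pair of opposite arcs. -/
def IsOriented (A : V → V → Prop) : Prop := ∀ u v, A u v → ¬ A v u

/-- A digraph is strongly connected if every vertex is reachable from every
other by a directed path. -/
def StronglyConnected (A : V → V → Prop) : Prop :=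
  ∀ u v : V, Relation.ReflTransGen A u v


-- ===== auxiliary development =====

section Construction

open Finset

variable (p : ℕ)

/-- Erdős–Turán Sidon-type values. -/
def Fq (i : ℕ) : ℕ := 2 * p * i + i ^ 2 % p

abbrev Vtx := ZMod (5 * p ^ 2)

def Arc (u v : Vtx p) : Prop := ∃ i, 1 ≤ i ∧ i < p ∧ v = u + (Fq p i : Vtx p)

variable {p}

lemma nz (hp5 : 5 ≤ p) : NeZero (5 * p ^ 2) := by
  have h : 0 < p ^ 2 := pow_pos (by omega) 2
  exact ⟨by omega⟩

lemma Fq_lt (hp5 : 5 ≤ p) {i : ℕ} (hi : i < p) : Fq p i < 2 * p ^ 2 := by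
  have h1 : i ^ 2 % p < p := Nat.mod_lt _ (by omega)
  have h2 : 2 * p * (i + 1) ≤ 2 * p * p := Nat.mul_le_mul_left _ (by omega)
  have h3 : 2 * p * (i + 1) = 2 * p * i + 2 * p := by ring
  have h4 : 2 * p * p = 2 * p ^ 2 := by ring
  unfold Fq; omega

lemma cast_inj (hp5 : 5 ≤ p) {a b : ℕ} (ha : a < 5 * p ^ 2) (hb : b < 5 * p ^ 2)
    (h : (a : Vtx p) = b) : a = b := by
  haveI := nz hp5
  have := congrArg ZMod.val h
  rwa [ZMod.val_cast_of_lt ha, ZMod.val_cast_of_lt hb] at this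

lemma div_key {a a' s s' : ℕ} (hp : 0 < p) (hs : s < 2 * p) (hs' : s' < 2 * p)
    (h : 2 * p * a + s = 2 * p * a' + s') : a = a' ∧ s = s' := by
  have h2p : 0 < 2 * p := by omega
  have ha : (2 * p * a + s) / (2 * p) = a := by
    rw [Nat.mul_add_div h2p, Nat.div_eq_of_lt hs]
    omega
  have ha' : (2 * p * a' + s') / (2 * p) = a' := by
    rw [Nat.mul_add_div h2p, Nat.div_eq_of_lt hs']
    omega
  have : a = a' := by rw [← ha, ← ha', h]
  subst this
  exact ⟨rfl, by omega⟩

lemma zmodp_cast_inj (hp : p.Prime) {a b : ℕ} (ha : a < p) (hb : b < p)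
    (h : (a : ZMod p) = b) : a = b := by
  haveI : NeZero p := ⟨hp.ne_zero⟩
  have := congrArg ZMod.val h
  rwa [ZMod.val_cast_of_lt ha, ZMod.val_cast_of_lt hb] at this

/-- The Sidon property over ℕ. -/
lemma sidon_nat (hp : p.Prime) (hp5 : 5 ≤ p) {i j i' j' : ℕ}
    (hi : i < p) (hj : j < p) (hi' : i' < p) (hj' : j' < p)
    (h : Fq p i + Fq p j' = Fq p i' + Fq p j) :
    (i = i' ∧ j = j') ∨ (i = j ∧ i' = j') := by
  have hq : ∀ x : ℕ, x ^ 2 % p < p := fun x => Nat.mod_lt _ (by omega)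
  have h' : 2 * p * (i + j') + (i ^ 2 % p + j' ^ 2 % p)
      = 2 * p * (i' + j) + (i' ^ 2 % p + j ^ 2 % p) := by
    unfold Fq at h; ring_nf at h ⊢; omega
  obtain ⟨hsum, hqsum⟩ := div_key (by omega) (by have := hq i; have := hq j'; omega)
    (by have := hq i'; have := hq j; omega) h'
  -- move to ZMod p
  haveI : Fact p.Prime := ⟨hp⟩
  have e1 : (i : ZMod p) + j' = (i' : ZMod p) + j := by
    have := congrArg (fun x : ℕ => (x : ZMod p)) hsum
    push_cast at this; exact this
  have e2 : (i : ZMod p) ^ 2 + (j' : ZMod p) ^ 2 = (i' : ZMod p) ^ 2 + (j : ZMod p) ^ 2 := by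
    have := congrArg (fun x : ℕ => (x : ZMod p)) hqsum
    push_cast [ZMod.natCast_mod] at this
    exact this
  set I := (i : ZMod p); set J := (j : ZMod p); set I' := (i' : ZMod p); set J' := (j' : ZMod p)
  by_cases hd : I = I'
  · left
    have : J = J' := by
      have : I + J' = I + J := by rw [e1, hd]
      exact (add_left_cancel this).symm
    exact ⟨zmodp_cast_inj hp hi hi' hd, zmodp_cast_inj hp hj hj' this⟩
  · right
    have hd' : I - I' ≠ 0 := sub_ne_zero.mpr hd
    have e1' : I - I' = J - J' := by linear_combination e1
    have e2' : (I - I') * (I + I') = (J - J') * (J + J') := by linear_combination e2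
    have e3 : I + I' = J + J' := by
      apply mul_left_cancel₀ hd'
      rw [e2', e1']
    have h2 : (2 : ZMod p) ≠ 0 := by
      intro h0
      have hdvd : p ∣ 2 := (ZMod.natCast_eq_zero_iff 2 p).mp (by push_cast; exact h0)
      have := Nat.le_of_dvd (by omega) hdvd
      omega
    have hIJ : I = J := by
      apply mul_left_cancel₀ h2
      have : I - I' = J - J' := e1'
      linear_combination e3 + this
    have hIJ' : I' = J' := by linear_combination e3 - hIJ
    exact ⟨zmodp_cast_inj hp hi hj hIJ, zmodp_cast_inj hp hi' hj' hIJ'⟩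

/-- Sidon in `ZMod (5p²)`. -/
lemma sidon_zmod (hp : p.Prime) (hp5 : 5 ≤ p) {i j i' j' : ℕ}
    (hi : i < p) (hj : j < p) (hi' : i' < p) (hj' : j' < p)
    (h : (Fq p i : Vtx p) + Fq p j' = (Fq p i' : Vtx p) + Fq p j) :
    (i = i' ∧ j = j') ∨ (i = j ∧ i' = j') := by
  have hb : ∀ {x : ℕ}, x < p → Fq p x < 2 * p ^ 2 := fun hx => Fq_lt hp5 hx
  have hnat : Fq p i + Fq p j' = Fq p i' + Fq p j := by
    apply cast_inj hp5 (by have := hb hi; have := hb hj'; omega)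
      (by have := hb hi'; have := hb hj; omega)
    push_cast
    exact h
  exact sidon_nat hp hp5 hi hj hi' hj' hnat

lemma Fq_zero : Fq p 0 = 0 := by simp [Fq]

/-- a cop not on the robber's vertex threatens at most one robber option -/
lemma kill_unique (hp : p.Prime) (hp5 : 5 ≤ p) {v r : Vtx p} (hvr : v ≠ r)
    {i i' j j' : ℕ} (hi : i < p) (hi' : i' < p) (hj : j < p) (hj' : j' < p)
    (h1 : r + (Fq p i : Vtx p) = v + Fq p j) (h2 : r + (Fq p i' : Vtx p) = v + Fq p j') :
    i = i' := by
  have key : (Fq p i : Vtx p) + Fq p j' = (Fq p i' : Vtx p) + Fq p j := by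
    have : r + ((Fq p i : Vtx p) + Fq p j') = r + ((Fq p i' : Vtx p) + Fq p j) := by
      calc r + ((Fq p i : Vtx p) + Fq p j') = (r + Fq p i) + Fq p j' := by ring
        _ = (v + Fq p j) + Fq p j' := by rw [h1]
        _ = (r + Fq p i') + Fq p j := by rw [h2]; ring
        _ = r + ((Fq p i' : Vtx p) + Fq p j) := by ring
    exact add_left_cancel this
  rcases sidon_zmod hp hp5 hi hj hi' hj' key with ⟨h, _⟩ | ⟨h, _⟩
  · exact h
  · exfalso
    apply hvr
    rw [h] at h1
    exact (add_right_cancel h1).symm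

def Safe (k : ℕ) (c : Fin k → Vtx p) (r : Vtx p) : Prop :=
  ∀ m : Fin k, ∀ j < p, c m + (Fq p j : Vtx p) ≠ r

lemma escape (hp : p.Prime) (hp5 : 5 ≤ p) {k : ℕ} (hk : k < p) :
    ∀ {t : ℕ} {c : Fin k → Vtx p} {r : Vtx p},
      CatchIn (Arc p) k t c r → Safe k c r → False := by
  intro t c r h
  induction h with
  | @caught t c r h =>
    intro hs
    obtain ⟨m, hm⟩ := h
    exact hs m 0 (by omega) (by rw [Fq_zero]; simpa using hm)
  | @stepCatch t c r c' hc h =>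
    intro hs
    obtain ⟨m, hm⟩ := h
    rcases hc m with he | ⟨i, hi1, hip, he⟩
    · exact hs m 0 (by omega) (by rw [Fq_zero]; simp; rw [← he]; exact hm)
    · exact hs m i hip (by rw [← he]; exact hm)
  | @step t c r c' hc h ih =>
    intro hs
    -- cops cannot be on r after their move
    have hcr : ∀ m, c' m ≠ r := by
      intro m hm
      rcases hc m with he | ⟨i, hi1, hip, he⟩
      · exact hs m 0 (by omega) (by rw [Fq_zero]; simp; rw [← he]; exact hm)
      · exact hs m i hip (by rw [← he]; exact hm)
    -- killed robber options
    set Kill : Fin k → Finset ℕ :=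
      fun m => (range p).filter (fun i => ∃ j, j < p ∧ r + (Fq p i : Vtx p) = c' m + Fq p j)
      with hKill
    have hcard1 : ∀ m, (Kill m).card ≤ 1 := by
      intro m
      apply Finset.card_le_one.mpr
      intro a ha b hb
      simp only [hKill, mem_filter, mem_range] at ha hb
      obtain ⟨hap, ja, hja, hea⟩ := ha
      obtain ⟨hbp, jb, hjb, heb⟩ := hb
      exact kill_unique hp hp5 (hcr m) hap hbp hja hjb hea heb
    set T := Finset.univ.biUnion Kill with hT
    have hTcard : T.card < p := by
      calc T.card ≤ ∑ m : Fin k, (Kill m).card := Finset.card_biUnion_le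
        _ ≤ ∑ _m : Fin k, 1 := Finset.sum_le_sum (fun m _ => hcard1 m)
        _ = k := by simp
        _ < p := hk
    have hsub : T ⊆ range p := by
      intro a ha
      rw [hT, Finset.mem_biUnion] at ha
      obtain ⟨m, _, ha⟩ := ha
      exact (Finset.mem_filter.mp ha).1
    have : (range p \ T).Nonempty := by
      rw [← Finset.card_pos, Finset.card_sdiff_of_subset hsub]
      simp only [Finset.card_range]
      omega
    obtain ⟨i, hi⟩ := this
    rw [Finset.mem_sdiff, Finset.mem_range] at hi
    obtain ⟨hip, hiT⟩ := hi
    -- robber moves to r + Fq i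
    have hmove : (r + (Fq p i : Vtx p) = r) ∨ Arc p r (r + Fq p i) := by
      rcases Nat.eq_zero_or_pos i with h0 | h1
      · left; rw [h0, Fq_zero]; simp
      · right; exact ⟨i, h1, hip, rfl⟩
    have hsafe' : Safe k c' (r + (Fq p i : Vtx p)) := by
      intro m j hj he
      apply hiT
      rw [hT, Finset.mem_biUnion]
      exact ⟨m, Finset.mem_univ m, by
        simp only [hKill, mem_filter, mem_range]
        exact ⟨hip, j, hj, he.symm⟩⟩
    exact ih _ hmove hsafe'

/-- with k < p cops, the robber has a safe starting vertex -/
lemma exists_safe_start (hp : p.Prime) (hp5 : 5 ≤ p) {k : ℕ} (hk : k < p)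
    (c : Fin k → Vtx p) : ∃ r : Vtx p, Safe k c r := by
  haveI := nz hp5
  set U : Finset (Vtx p) :=
    Finset.univ.biUnion (fun m => (range p).image (fun j => c m + (Fq p j : Vtx p))) with hU
  have hUcard : U.card < Fintype.card (Vtx p) := by
    have h1 : U.card ≤ k * p := by
      calc U.card ≤ ∑ m : Fin k, ((range p).image (fun j => c m + (Fq p j : Vtx p))).card :=
            Finset.card_biUnion_le
        _ ≤ ∑ _m : Fin k, p := Finset.sum_le_sum (fun m _ =>
            le_trans Finset.card_image_le (by simp))
        _ = k * p := by simp [mul_comm]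
    have h2 : Fintype.card (Vtx p) = 5 * p ^ 2 := ZMod.card _
    have h3 : k * p < 5 * p ^ 2 := by nlinarith
    omega
  have : ∃ r : Vtx p, r ∉ U := by
    by_contra hno
    push_neg at hno
    have : Finset.univ ⊆ U := fun r _ => hno r
    have := Finset.card_le_card this
    simp only [Finset.card_univ] at this
    omega
  obtain ⟨r, hr⟩ := this
  refine ⟨r, fun m j hj he => hr ?_⟩
  rw [hU, Finset.mem_biUnion]
  exact ⟨m, Finset.mem_univ m, Finset.mem_image.mpr ⟨j, Finset.mem_range.mpr hj, he⟩⟩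

lemma copsWin_all (hp5 : 5 ≤ p) : CopsWin (Arc p) (5 * p ^ 2) := by
  haveI := nz hp5
  have hcard : Fintype.card (Vtx p) = 5 * p ^ 2 := ZMod.card _
  exact ⟨0, (Fintype.equivFinOfCardEq hcard).symm, fun r =>
    CatchIn.caught ⟨Fintype.equivFinOfCardEq hcard r, by simp⟩⟩

lemma p_le_copNumber (hp : p.Prime) (hp5 : 5 ≤ p) : p ≤ copNumber (Arc p) := by
  have hmem : copNumber (Arc p) ∈ {k | CopsWin (Arc p) k} :=
    Nat.sInf_mem ⟨5 * p ^ 2, copsWin_all hp5⟩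
  by_contra hlt
  push_neg at hlt
  obtain ⟨t, c, hall⟩ := hmem
  obtain ⟨r, hr⟩ := exists_safe_start hp hp5 hlt c
  exact escape hp hp5 hlt (hall r) hr

lemma oriented (hp5 : 5 ≤ p) : IsOriented (Arc p) := by
  intro u v ⟨i, hi1, hip, he⟩ ⟨j, hj1, hjp, he'⟩
  have : (Fq p i : Vtx p) + Fq p j = 0 := by
    have : u + ((Fq p i : Vtx p) + Fq p j) = u + 0 := by
      rw [add_zero]
      calc u + ((Fq p i : Vtx p) + Fq p j) = (u + Fq p i) + Fq p j := by ring
        _ = v + Fq p j := by rw [← he]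
        _ = u := he'.symm
    exact add_left_cancel this
  have hnat : ((Fq p i + Fq p j : ℕ) : Vtx p) = ((0 : ℕ) : Vtx p) := by push_cast; simpa
  have hbi := Fq_lt hp5 hip
  have hbj := Fq_lt hp5 hjp
  have hpos : 0 < Fq p i := by
    unfold Fq; have : 2 * p * 1 ≤ 2 * p * i := Nat.mul_le_mul_left _ hi1; omega
  have := cast_inj hp5 (by omega) (by omega) hnat
  omega

lemma reach_step (hp5 : 5 ≤ p) {s : ℕ} (hs1 : 1 ≤ s) (hsp : s < p) :
    ∀ (a : ℕ) (u : Vtx p), Relation.ReflTransGen (Arc p) u (u + (a : Vtx p) * (Fq p s : Vtx p)) := by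
  intro a
  induction a with
  | zero => intro u; simpa using Relation.ReflTransGen.refl
  | succ a ih =>
    intro u
    have harc : Arc p (u + (a : Vtx p) * Fq p s) (u + ((a : ℕ) + 1 : Vtx p) * Fq p s) :=
      ⟨s, hs1, hsp, by ring⟩
    have : ((a + 1 : ℕ) : Vtx p) = (a : Vtx p) + 1 := by push_cast; ring
    rw [this]
    exact (ih u).tail harc

lemma strongly_connected (hp5 : 5 ≤ p) : StronglyConnected (Arc p) := by
  intro u v
  have h1 : Fq p 1 = 2 * p + 1 := by
    unfold Fq; rw [Nat.one_pow, Nat.mod_eq_of_lt (by omega)]; ring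
  have h2 : Fq p 2 = 4 * p + 4 := by
    unfold Fq
    have : 2 ^ 2 = 4 := by norm_num
    rw [this, Nat.mod_eq_of_lt (by omega)]; ring
  set d : Vtx p := v - u with hd
  set X : Vtx p := ((2 * p + 1 : ℕ) : Vtx p) * d with hX
  set Y : Vtx p := (p : Vtx p) * d with hY
  -- identity : (2p+1)² - p(4p+4) = 1
  have key : X * (Fq p 1 : Vtx p) - Y * (Fq p 2 : Vtx p) = d := by
    rw [hX, hY, h1, h2]
    push_cast
    ring
  -- use a = X.val, then subtract multiples: instead use b for Y via negation
  haveI := nz hp5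
  set a := X.val with ha
  set b := (-Y).val with hb
  have hav : (a : Vtx p) = X := by rw [ha, ZMod.natCast_val, ZMod.cast_id]
  have hbv : (b : Vtx p) = -Y := by rw [hb, ZMod.natCast_val, ZMod.cast_id]
  have step1 := reach_step hp5 (le_refl 1) (by omega) a u
  have step2 := reach_step hp5 (by omega : (1:ℕ) ≤ 2) (by omega) b (u + (a : Vtx p) * Fq p 1)
  have hfinal : u + (a : Vtx p) * Fq p 1 + (b : Vtx p) * Fq p 2 = v := by
    rw [hav, hbv]
    have : X * (Fq p 1 : Vtx p) + (-Y) * (Fq p 2 : Vtx p) = d := by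
      rw [← key]; ring
    rw [mul_comm X _, mul_comm (-Y) _] at this
    calc u + X * (Fq p 1 : Vtx p) + -Y * (Fq p 2 : Vtx p)
        = u + (X * (Fq p 1 : Vtx p) + -Y * (Fq p 2 : Vtx p)) := by ring
      _ = u + d := by rw [mul_comm X _, mul_comm (-Y) _, this]
      _ = v := by rw [hd]; ring
  rw [← hfinal]
  exact step1.trans step2

end Construction


/-- For every `N` there are `n ≥ N` and a strongly connected oriented graph on
`n` vertices with cop number at least `√n / 5`. -/
theorem stmt_7 (N : ℕ) :
    ∃ n : ℕ, N ≤ n ∧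
      ∃ (V : Type) (_ : Fintype V) (A : V → V → Prop),
        Fintype.card V = n ∧ IsOriented A ∧ StronglyConnected A ∧
        Real.sqrt n / 5 ≤ (copNumber A : ℝ) := by
  obtain ⟨p, hpge, hp⟩ := Nat.exists_infinite_primes (max N 5)
  have hp5 : 5 ≤ p := le_trans (le_max_right _ _) hpge
  have hpN : N ≤ p := le_trans (le_max_left _ _) hpge
  haveI := nz hp5
  have hple : p ≤ 5 * p ^ 2 := by nlinarith
  refine ⟨5 * p ^ 2, by omega, ZMod (5 * p ^ 2), inferInstance, Arc p, ZMod.card _,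
    oriented hp5, strongly_connected hp5, ?_⟩
  have hcop : (p : ℝ) ≤ (copNumber (Arc p) : ℝ) := by
    exact_mod_cast p_le_copNumber hp hp5
  have hs : Real.sqrt ((5 * p ^ 2 : ℕ) : ℝ) ≤ 5 * (p : ℝ) := by
    rw [show ((5 * p ^ 2 : ℕ) : ℝ) = 5 * (p : ℝ) ^ 2 by push_cast; ring]
    have h1 : (5 : ℝ) * (p : ℝ) ^ 2 ≤ (5 * (p : ℝ)) ^ 2 := by nlinarith [sq_nonneg (p : ℝ)]
    calc Real.sqrt (5 * (p : ℝ) ^ 2) ≤ Real.sqrt ((5 * (p : ℝ)) ^ 2) := Real.sqrt_le_sqrt h1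
      _ = 5 * (p : ℝ) := Real.sqrt_sq (by positivity)
  linarith

end CopsRobbers
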